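/- Let Q ⊆ L be a radical extension with [L:Q] = p an odd prime, and suppose L is not Galois over Q. Then L = Q[α] for some element α with α^p ∈ Q. -/

import Mathlib

/-- A radical extension of odd prime degree `p` that is not Galois is generated
by an element `α` with `α ^ p` in the ground field. -/
theorem stmt5 (Q L : Type*) [Field Q] [Field L] [Algebra Q L]
    [FiniteDimensional Q L] (p : ℕ) (hp : p.Prime) (hodd : Odd p)
    (hdeg : Module.finrank Q L = p)
    (hrad : ∃ α : L, (∃ n : ℕ, 0 < n ∧ α ^ n ∈ (algebraMap Q L).range) ∧
      Algebra.adjoin Q {α} = ⊤)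
    (hngal : ¬ IsGalois Q L) :
    ∃ α : L, α ^ p ∈ (algebraMap Q L).range ∧ Algebra.adjoin Q {α} = ⊤ := by
  obtain ⟨α, ⟨n, hn, a, ha⟩, hadj⟩ := hrad
  -- α ≠ 0
  have hα0 : α ≠ 0 := by
    rintro rfl
    have hbot : Algebra.adjoin Q ({(0 : L)} : Set L) ≤ ⊥ :=
      Algebra.adjoin_le (by simp)
    have : (⊥ : Subalgebra Q L) = ⊤ := le_antisymm le_top (hadj ▸ hbot)
    have h1 : Module.finrank Q L = 1 := Subalgebra.bot_eq_top_iff_finrank_eq_one.mp this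
    rw [hdeg] at h1
    exact hp.one_lt.ne' h1
  have ha0 : a ≠ 0 := by
    rintro rfl
    exact pow_ne_zero n hα0 (by simpa using ha.symm)
  set N : Q := Algebra.norm Q α with hN
  have hNn : N ^ n = a ^ p := by
    rw [hN, ← map_pow, ← ha, Algebra.norm_algebraMap, hdeg]
  have hmapa : algebraMap Q L a ≠ 0 := by
    simpa using (map_ne_zero_iff _ (algebraMap Q L).injective).mpr ha0
  have hNL0 : algebraMap Q L N ≠ 0 := by
    have : N ≠ 0 := fun h => by
      rw [h] at hNn
      exact pow_ne_zero p ha0 (by simpa [hn.ne'] using hNn.symm)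
    simpa using (map_ne_zero_iff _ (algebraMap Q L).injective).mpr this
  set ζ : L := algebraMap Q L N * (α ^ p)⁻¹ with hζ
  have hαp0 : α ^ p ≠ 0 := pow_ne_zero p hα0
  have hζ0 : ζ ≠ 0 := mul_ne_zero hNL0 (inv_ne_zero hαp0)
  have hζn : ζ ^ n = 1 := by
    have h1 : (algebraMap Q L N) ^ n = (α ^ p) ^ n := by
      rw [← map_pow, hNn, map_pow, ha, ← pow_mul, mul_comm n p, pow_mul]
    rw [hζ, mul_pow, h1, inv_pow]
    exact mul_inv_cancel₀ (pow_ne_zero n hαp0)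
  by_cases hζQ : ζ ∈ (algebraMap Q L).range
  · -- then α ^ p = algebraMap N * ζ⁻¹ lies in Q
    obtain ⟨x, hx⟩ := hζQ
    refine ⟨α, ⟨N * x⁻¹, ?_⟩, hadj⟩
    have hx0 : x ≠ 0 := by
      rintro rfl; simp at hx; exact hζ0 hx.symm
    rw [map_mul, map_inv₀, hx, hζ]
    field_simp
  · -- otherwise L = Q(ζ) is Galois, contradiction
    exfalso
    have hfin : IsOfFinOrder ζ := isOfFinOrder_iff_pow_eq_one.mpr ⟨n, hn, hζn⟩
    set m : ℕ := orderOf ζ with hm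
    have hm0 : 0 < m := hfin.orderOf_pos
    have hprim : IsPrimitiveRoot ζ m := IsPrimitiveRoot.orderOf ζ
    have : NeZero m := ⟨hm0.ne'⟩
    have hmL : ((m : ℕ) : L) ≠ 0 := (hprim.neZero').out
    have hmQ : ((m : ℕ) : Q) ≠ 0 := by
      intro h
      apply hmL
      rw [← map_natCast (algebraMap Q L) m, h, map_zero]
    have hζint : IsIntegral Q ζ := IsIntegral.of_finite Q ζ
    set f : Polynomial Q := minpoly Q ζ with hf
    have hfne : f ≠ 0 := minpoly.ne_zero hζint
    -- f divides X^m - 1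
    have hfdvd : f ∣ Polynomial.X ^ m - 1 := by
      apply minpoly.dvd
      simp [hprim.pow_eq_one]
    -- f is separable
    have hfsep : f.Separable :=
      (Polynomial.X_pow_sub_one_separable_iff.mpr hmQ).of_dvd hfdvd
    -- f splits in L
    have hXsplits : ((Polynomial.X ^ m - 1 : Polynomial Q).map (algebraMap Q L)).Splits := by
      have := Polynomial.X_pow_sub_one_splits hprim
      simpa [Polynomial.map_sub, Polynomial.map_pow] using this
    have hfsplits : (f.map (algebraMap Q L)).Splits :=
      hXsplits.of_dvd
        (Polynomial.map_ne_zero (by simpa using Polynomial.X_pow_sub_C_ne_zero hm0 (1 : Q)))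
        (Polynomial.map_dvd _ hfdvd)
    -- degree of f is p, hence Q⟮ζ⟯ = L
    have hddvd : f.natDegree ∣ p := hdeg ▸ minpoly.degree_dvd hζint
    have hd1 : f.natDegree ≠ 1 := by
      intro h1
      apply hζQ
      rw [← minpoly.degree_eq_one_iff]
      rw [Polynomial.degree_eq_natDegree hfne, h1]
      rfl
    have hdp : f.natDegree = p := by
      rcases (Nat.Prime.eq_one_or_self_of_dvd hp _ hddvd) with h | h
      · exact absurd h hd1
      · exact h
    have hadjζ : Algebra.adjoin Q ({ζ} : Set L) = ⊤ := by
      have hfr : Module.finrank Q (Algebra.adjoin Q ({ζ} : Set L)) = p := by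
        rw [← IntermediateField.adjoin_simple_toSubalgebra_of_isAlgebraic hζint.isAlgebraic,
          IntermediateField.finrank_eq_finrank_subalgebra,
          IntermediateField.adjoin.finrank hζint, hdp]
      have := Submodule.eq_top_of_finrank_eq
        (S := Subalgebra.toSubmodule (Algebra.adjoin Q ({ζ} : Set L)))
        (by rw [hdeg]; exact hfr)
      rwa [Algebra.toSubmodule_eq_top] at this
    have hroot : ζ ∈ f.rootSet L := by
      rw [Polynomial.mem_rootSet]
      exact ⟨hfne, minpoly.aeval Q ζ⟩
    have hsf : Polynomial.IsSplittingField Q L f := by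
      constructor
      · exact hfsplits
      · refine le_antisymm le_top ?_
        rw [← hadjζ]
        exact Algebra.adjoin_mono (Set.singleton_subset_iff.mpr hroot)
    exact hngal (IsGalois.of_separable_splitting_field hfsep)
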